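/- Suppose a, v₁,…,v₈ are real numbers with (v₁,…,v₈) a solution to U₈ v = (1,1,1,1,1,a,a,a)^T, where U₈ is the 8×8 Gram matrix [[3,1,1,1,0,0,0,1],[1,3,1,0,1,1,0,0],[1,1,3,0,0,0,1,0],[1,0,0,3,1,1,1,0],[0,1,0,1,3,0,1,1],[0,1,0,1,0,3,1,1],[0,0,1,1,1,1,3,1],[1,0,0,0,1,1,1,3]]. Then v₇ = (a-1)/3. In particular, if 0 < a < 1 then v₇ < 0. -/
import Mathlib

noncomputable def U8 : Matrix (Fin 8) (Fin 8) ℝ :=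
  !![3,1,1,1,0,0,0,1;
     1,3,1,0,1,1,0,0;
     1,1,3,0,0,0,1,0;
     1,0,0,3,1,1,1,0;
     0,1,0,1,3,0,1,1;
     0,1,0,1,0,3,1,1;
     0,0,1,1,1,1,3,1;
     1,0,0,0,1,1,1,3]

/-- Any solution of `U8 v = (1,1,1,1,1,a,a,a)ᵀ` has `v₇ = (a-1)/3`; in
particular if `0 < a < 1` then `v₇ < 0`. -/
theorem stmt14 (a : ℝ) (v : Fin 8 → ℝ)
    (h : U8.mulVec v = ![1,1,1,1,1,a,a,a]) :
    v 6 = (a - 1)/3 ∧ (0 < a → a < 1 → v 6 < 0) := by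
  have e1 : (1:ℝ) * v 0 + (3:ℝ) * v 1 + (1:ℝ) * v 2 + (0:ℝ) * v 3 + (1:ℝ) * v 4 + (1:ℝ) * v 5 + (0:ℝ) * v 6 + (0:ℝ) * v 7 = 1 := by
    have := congrFun h 1
    simp only [Matrix.mulVec, dotProduct] at this
    rw [Fin.sum_univ_eight] at this
    simpa only [show U8 1 0 = (1:ℝ) from rfl, show U8 1 1 = (3:ℝ) from rfl, show U8 1 2 = (1:ℝ) from rfl, show U8 1 3 = (0:ℝ) from rfl, show U8 1 4 = (1:ℝ) from rfl, show U8 1 5 = (1:ℝ) from rfl, show U8 1 6 = (0:ℝ) from rfl, show U8 1 7 = (0:ℝ) from rfl, show (![1,1,1,1,1,a,a,a] : Fin 8 → ℝ) 1 = 1 from rfl] using this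
  have e2 : (1:ℝ) * v 0 + (1:ℝ) * v 1 + (3:ℝ) * v 2 + (0:ℝ) * v 3 + (0:ℝ) * v 4 + (0:ℝ) * v 5 + (1:ℝ) * v 6 + (0:ℝ) * v 7 = 1 := by
    have := congrFun h 2
    simp only [Matrix.mulVec, dotProduct] at this
    rw [Fin.sum_univ_eight] at this
    simpa only [show U8 2 0 = (1:ℝ) from rfl, show U8 2 1 = (1:ℝ) from rfl, show U8 2 2 = (3:ℝ) from rfl, show U8 2 3 = (0:ℝ) from rfl, show U8 2 4 = (0:ℝ) from rfl, show U8 2 5 = (0:ℝ) from rfl, show U8 2 6 = (1:ℝ) from rfl, show U8 2 7 = (0:ℝ) from rfl, show (![1,1,1,1,1,a,a,a] : Fin 8 → ℝ) 2 = 1 from rfl] using this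
  have e4 : (0:ℝ) * v 0 + (1:ℝ) * v 1 + (0:ℝ) * v 2 + (1:ℝ) * v 3 + (3:ℝ) * v 4 + (0:ℝ) * v 5 + (1:ℝ) * v 6 + (1:ℝ) * v 7 = 1 := by
    have := congrFun h 4
    simp only [Matrix.mulVec, dotProduct] at this
    rw [Fin.sum_univ_eight] at this
    simpa only [show U8 4 0 = (0:ℝ) from rfl, show U8 4 1 = (1:ℝ) from rfl, show U8 4 2 = (0:ℝ) from rfl, show U8 4 3 = (1:ℝ) from rfl, show U8 4 4 = (3:ℝ) from rfl, show U8 4 5 = (0:ℝ) from rfl, show U8 4 6 = (1:ℝ) from rfl, show U8 4 7 = (1:ℝ) from rfl, show (![1,1,1,1,1,a,a,a] : Fin 8 → ℝ) 4 = 1 from rfl] using this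
  have e5 : (0:ℝ) * v 0 + (1:ℝ) * v 1 + (0:ℝ) * v 2 + (1:ℝ) * v 3 + (0:ℝ) * v 4 + (3:ℝ) * v 5 + (1:ℝ) * v 6 + (1:ℝ) * v 7 = a := by
    have := congrFun h 5
    simp only [Matrix.mulVec, dotProduct] at this
    rw [Fin.sum_univ_eight] at this
    simpa only [show U8 5 0 = (0:ℝ) from rfl, show U8 5 1 = (1:ℝ) from rfl, show U8 5 2 = (0:ℝ) from rfl, show U8 5 3 = (1:ℝ) from rfl, show U8 5 4 = (0:ℝ) from rfl, show U8 5 5 = (3:ℝ) from rfl, show U8 5 6 = (1:ℝ) from rfl, show U8 5 7 = (1:ℝ) from rfl, show (![1,1,1,1,1,a,a,a] : Fin 8 → ℝ) 5 = a from rfl] using this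
  have e6 : (0:ℝ) * v 0 + (0:ℝ) * v 1 + (1:ℝ) * v 2 + (1:ℝ) * v 3 + (1:ℝ) * v 4 + (1:ℝ) * v 5 + (3:ℝ) * v 6 + (1:ℝ) * v 7 = a := by
    have := congrFun h 6
    simp only [Matrix.mulVec, dotProduct] at this
    rw [Fin.sum_univ_eight] at this
    simpa only [show U8 6 0 = (0:ℝ) from rfl, show U8 6 1 = (0:ℝ) from rfl, show U8 6 2 = (1:ℝ) from rfl, show U8 6 3 = (1:ℝ) from rfl, show U8 6 4 = (1:ℝ) from rfl, show U8 6 5 = (1:ℝ) from rfl, show U8 6 6 = (3:ℝ) from rfl, show U8 6 7 = (1:ℝ) from rfl, show (![1,1,1,1,1,a,a,a] : Fin 8 → ℝ) 6 = a from rfl] using this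
  have hv : v 6 = (a - 1)/3 := by linarith
  exact ⟨hv, fun h0 h1 => by rw [hv]; linarith⟩
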